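/- Let X ⊂ ℂ² and Y ⊂ ℂ² be algebraic curves, let p be a node of X and q a node of Y. Then the germs (X, p) and (Y, q) are bi-Lipschitz equivalent. -/

import Mathlib

open Set Metric

noncomputable section

/-- An algebraic set in ℂᵏ: the common zero set of a finite family of polynomials. -/
def IsAlgebraicSet {k : ℕ} (X : Set (EuclideanSpace ℂ (Fin k))) : Prop :=
  ∃ S : Finset (MvPolynomial (Fin k) ℂ),
    X = {x | ∀ p ∈ S, MvPolynomial.eval (fun i => x i) p = 0}

/-- An irreducible algebraic curve: an infinite algebraic set all of whose proper algebraic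
subsets are finite. -/
def IsIrreducibleAlgebraicCurve {k : ℕ} (X : Set (EuclideanSpace ℂ (Fin k))) : Prop :=
  IsAlgebraicSet X ∧ X.Infinite ∧ ∀ Y, IsAlgebraicSet Y → Y ⊂ X → Y.Finite

/-- An algebraic curve: a finite union of irreducible algebraic curves. -/
def IsAlgebraicCurve {k : ℕ} (X : Set (EuclideanSpace ℂ (Fin k))) : Prop :=
  ∃ F : Finset (Set (EuclideanSpace ℂ (Fin k))),
    (∀ C ∈ F, IsIrreducibleAlgebraicCurve C) ∧ X = ⋃ C ∈ F, C

/-- `f` maps `X` bijectively onto `Y` and is bi-Lipschitz (outer metric). -/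
def IsBiLipschitzOn {E F : Type*} [NormedAddCommGroup E] [NormedAddCommGroup F]
    (f : E → F) (X : Set E) (Y : Set F) : Prop :=
  Set.BijOn f X Y ∧ ∃ C : ℝ, 1 ≤ C ∧ ∀ x ∈ X, ∀ x' ∈ X,
    C⁻¹ * ‖x - x'‖ ≤ ‖f x - f x'‖ ∧ ‖f x - f x'‖ ≤ C * ‖x - x'‖

/-- `X` and `Y` are bi-Lipschitz equivalent (with respect to the outer Euclidean metric). -/
def BiLipschitzEquiv {E F : Type*} [NormedAddCommGroup E] [NormedAddCommGroup F]
    (X : Set E) (Y : Set F) : Prop :=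
  ∃ f : E → F, IsBiLipschitzOn f X Y

/-- `X` and `Y` are bi-Lipschitz equivalent at infinity. -/
def BiLipschitzEquivAtInfinity {E F : Type*} [NormedAddCommGroup E] [NormedAddCommGroup F]
    (X : Set E) (Y : Set F) : Prop :=
  ∃ (K₁ : Set E) (K₂ : Set F), IsCompact K₁ ∧ IsCompact K₂ ∧
    BiLipschitzEquiv (X \ K₁) (Y \ K₂)

/-- The germs `(X, p)` and `(Y, q)` are bi-Lipschitz equivalent. -/
def GermBiLipschitzEquiv {E F : Type*} [NormedAddCommGroup E] [NormedAddCommGroup F]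
    (X : Set E) (p : E) (Y : Set F) (q : F) : Prop :=
  ∃ (U : Set E) (V : Set F), IsOpen U ∧ IsOpen V ∧ p ∈ U ∧ q ∈ V ∧
    ∃ f : E → F, IsBiLipschitzOn f (X ∩ U) (Y ∩ V) ∧ f p = q

/-- `γ` maps `D` homeomorphically onto `S`. -/
def MapsHomeomorphicallyOnto {E : Type*} [TopologicalSpace E]
    (γ : ℂ → E) (D : Set ℂ) (S : Set E) : Prop :=
  Set.InjOn γ D ∧ γ '' D = S ∧ ContinuousOn γ D ∧
    ∃ σ : E → ℂ, ContinuousOn σ S ∧ ∀ z ∈ D, σ (γ z) = z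

/-- A regular point of a curve `X ⊂ ℂᵏ`: some neighborhood of `p` in `X` is the
homeomorphic image of an injective holomorphic map with nowhere-vanishing derivative. -/
def IsRegularPoint {k : ℕ} (X : Set (EuclideanSpace ℂ (Fin k)))
    (p : EuclideanSpace ℂ (Fin k)) : Prop :=
  ∃ (U : Set (EuclideanSpace ℂ (Fin k))) (D : Set ℂ) (γ : ℂ → EuclideanSpace ℂ (Fin k)),
    IsOpen U ∧ p ∈ U ∧ IsOpen D ∧ DifferentiableOn ℂ γ D ∧ Set.InjOn γ D ∧
    (∀ z ∈ D, deriv γ z ≠ 0) ∧ MapsHomeomorphicallyOnto γ D (X ∩ U)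

/-- The set of singular points of `X`. -/
def SingularSet {k : ℕ} (X : Set (EuclideanSpace ℂ (Fin k))) :
    Set (EuclideanSpace ℂ (Fin k)) :=
  {p ∈ X | ¬ IsRegularPoint X p}

/-- `B` is a (smooth) branch through `q` with tangent vector `v`. -/
def IsBranchAt (B : Set (EuclideanSpace ℂ (Fin 2))) (q v : EuclideanSpace ℂ (Fin 2)) : Prop :=
  ∃ (D : Set ℂ) (γ : ℂ → EuclideanSpace ℂ (Fin 2)) (z₀ : ℂ),
    IsOpen D ∧ z₀ ∈ D ∧ DifferentiableOn ℂ γ D ∧ Set.InjOn γ D ∧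
    (∀ z ∈ D, deriv γ z ≠ 0) ∧ MapsHomeomorphicallyOnto γ D B ∧
    γ z₀ = q ∧ deriv γ z₀ = v

/-- `q` is a node of the plane curve `Y`: near `q`, `Y` is the union of two smooth branches
meeting only at `q` with distinct tangent lines. -/
def IsNode (Y : Set (EuclideanSpace ℂ (Fin 2))) (q : EuclideanSpace ℂ (Fin 2)) : Prop :=
  q ∈ Y ∧ ∃ (U B₁ B₂ : Set (EuclideanSpace ℂ (Fin 2))) (v₁ v₂ : EuclideanSpace ℂ (Fin 2)),
    IsOpen U ∧ q ∈ U ∧ Y ∩ U = B₁ ∪ B₂ ∧ B₁ ∩ B₂ = {q} ∧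
    IsBranchAt B₁ q v₁ ∧ IsBranchAt B₂ q v₂ ∧ ∀ c : ℂ, v₂ ≠ c • v₁

/-- The set of points of `ℂ²` having more than one `π`-preimage in `X`. -/
def MultipleSet {n : ℕ} (π : EuclideanSpace ℂ (Fin n) →ₗ[ℂ] EuclideanSpace ℂ (Fin 2))
    (X : Set (EuclideanSpace ℂ (Fin n))) : Set (EuclideanSpace ℂ (Fin 2)) :=
  {q | ∃ x ∈ X, ∃ y ∈ X, x ≠ y ∧ π x = q ∧ π y = q}

/-- `π` is a generic plane projection for the algebraic curve `X ⊂ ℂⁿ`. -/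
def IsGenericPlaneProjection {n : ℕ}
    (π : EuclideanSpace ℂ (Fin n) →ₗ[ℂ] EuclideanSpace ℂ (Fin 2))
    (X : Set (EuclideanSpace ℂ (Fin n))) : Prop :=
  Function.Surjective π ∧
  (∀ K : Set (EuclideanSpace ℂ (Fin 2)), IsCompact K → IsCompact (X ∩ ⇑π ⁻¹' K)) ∧
  (MultipleSet π X).Finite ∧
  (∀ q ∈ MultipleSet π X, ∃ x y, x ≠ y ∧ {z ∈ X | π z = q} = {x, y} ∧
    IsRegularPoint X x ∧ IsRegularPoint X y) ∧
  (∀ q ∈ MultipleSet π X, IsNode (⇑π '' X) q) ∧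
  (∀ p ∈ X, π p ∉ MultipleSet π X →
    ∃ (U : Set (EuclideanSpace ℂ (Fin n))) (V : Set (EuclideanSpace ℂ (Fin 2))),
      IsOpen U ∧ IsOpen V ∧ p ∈ U ∧ π p ∈ V ∧
      IsBiLipschitzOn (⇑π) (X ∩ U) ((⇑π '' X) ∩ V))

/-- The complex projective plane `ℂP²`. -/
abbrev ProjPlane : Type := Projectivization ℂ (Fin 3 → ℂ)

instance : TopologicalSpace ProjPlane :=
  inferInstanceAs (TopologicalSpace (Quotient (projectivizationSetoid ℂ (Fin 3 → ℂ))))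

/-- The embedding `ℂ² → ℂP²`, `(x, y) ↦ (x : y : 1)`. -/
def toProj (p : EuclideanSpace ℂ (Fin 2)) : ProjPlane :=
  Projectivization.mk ℂ ![p 0, p 1, 1] (fun h => by simpa using congrFun h 2)

/-- The line at infinity in `ℂP²`. -/
def lineAtInfinity : Set ProjPlane := {P | P.rep 2 = 0}

/-- The projective closure of a plane curve `X ⊂ ℂ²`: the topological closure in `ℂP²`. -/
def projClosure (X : Set (EuclideanSpace ℂ (Fin 2))) : Set ProjPlane :=
  closure (toProj '' X)

/-- The germs `(A, p)` and `(B, q)` are (ambient) topologically equivalent. -/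
def GermTopEquiv {T : Type*} [TopologicalSpace T] (A : Set T) (p : T) (B : Set T) (q : T) :
    Prop :=
  ∃ (U V : Set T) (φ ψ : T → T),
    IsOpen U ∧ IsOpen V ∧ p ∈ U ∧ q ∈ V ∧
    ContinuousOn φ U ∧ ContinuousOn ψ V ∧ Set.MapsTo φ U V ∧ Set.MapsTo ψ V U ∧
    (∀ x ∈ U, ψ (φ x) = x) ∧ (∀ y ∈ V, φ (ψ y) = y) ∧
    φ p = q ∧ φ '' (A ∩ U) = B ∩ V

/-- The `i`-th standard affine chart of `ℂP²`. -/
def chart (i : Fin 3) (P : ProjPlane) : EuclideanSpace ℂ (Fin 2) :=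
  (EuclideanSpace.equiv (Fin 2) ℂ).symm fun j => P.rep (i.succAbove j) / P.rep i

/-- A regular point of a curve `C ⊂ ℂP²`: read in a standard affine chart, some neighborhood
of `p` in `C` is the homeomorphic image of an injective holomorphic map with
nowhere-vanishing derivative. -/
def IsRegularPointProj (C : Set ProjPlane) (p : ProjPlane) : Prop :=
  ∃ i : Fin 3, p.rep i ≠ 0 ∧
    ∃ W : Set ProjPlane, IsOpen W ∧ p ∈ W ∧ W ⊆ {P : ProjPlane | P.rep i ≠ 0} ∧
      ∃ (D : Set ℂ) (γ : ℂ → EuclideanSpace ℂ (Fin 2)),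
        IsOpen D ∧ DifferentiableOn ℂ γ D ∧ Set.InjOn γ D ∧ (∀ z ∈ D, deriv γ z ≠ 0) ∧
        MapsHomeomorphicallyOnto γ D (chart i '' (C ∩ W))

/-- The set of singular points of a curve `C ⊂ ℂP²`. -/
def SingularSetProj (C : Set ProjPlane) : Set ProjPlane :=
  {p ∈ C | ¬ IsRegularPointProj C p}

/-- `C` is an irreducible component of the algebraic curve `X`. -/
def IsIrreducibleComponent {k : ℕ} (C X : Set (EuclideanSpace ℂ (Fin k))) : Prop :=
  IsIrreducibleAlgebraicCurve C ∧ C ⊆ X ∧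
    ∀ C', IsIrreducibleAlgebraicCurve C' → C' ⊆ X → C ⊆ C' → C' = C

/-- The degree of an algebraic plane curve: the minimal degree of a nonzero polynomial
vanishing identically on it. -/
def curveDegree (X : Set (EuclideanSpace ℂ (Fin 2))) : ℕ :=
  sInf {d | ∃ P : MvPolynomial (Fin 2) ℂ, P ≠ 0 ∧ P.totalDegree = d ∧
    ∀ x ∈ X, MvPolynomial.eval (fun i => x i) P = 0}

/-! ### Auxiliary machinery for statement 8 -/

/-- A bi-Lipschitz holomorphic chart for a branch `B` at `c` with tangent `v`, at scale `ρ`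
with error `ε`. -/
structure ChartAt (τ : EuclideanSpace ℂ (Fin 2) → ℂ) (η : ℂ → EuclideanSpace ℂ (Fin 2))
    (B : Set (EuclideanSpace ℂ (Fin 2))) (c v : EuclideanSpace ℂ (Fin 2)) (ρ ε : ℝ) : Prop where
  rpos : 0 < ρ
  eta0 : η 0 = c
  tau0 : τ c = 0
  etaTau : ∀ x ∈ B, η (τ x) = x
  memB : ∀ u : ℂ, ‖u‖ < ρ → η u ∈ B
  tauEta : ∀ u : ℂ, ‖u‖ < ρ → τ (η u) = u
  est : ∀ u u' : ℂ, ‖u‖ < ρ → ‖u'‖ < ρ → ‖η u - η u' - (u - u') • v‖ ≤ ε * ‖u - u'‖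

lemma ChartAt.mono {τ η B c v ρ ε} (h : ChartAt τ η B c v ρ ε) {ρ' : ℝ} (h0 : 0 < ρ')
    (hle : ρ' ≤ ρ) : ChartAt τ η B c v ρ' ε where
  rpos := h0
  eta0 := h.eta0
  tau0 := h.tau0
  etaTau := h.etaTau
  memB := fun u hu => h.memB u (lt_of_lt_of_le hu hle)
  tauEta := fun u hu => h.tauEta u (lt_of_lt_of_le hu hle)
  est := fun u u' hu hu' => h.est u u' (lt_of_lt_of_le hu hle) (lt_of_lt_of_le hu' hle)

lemma sandwich {y w : EuclideanSpace ℂ (Fin 2)} {dn ε K : ℝ}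
    (h : ‖y - w‖ ≤ ε * dn) (h1 : 2 * ε * dn ≤ ‖w‖) (h2 : ‖w‖ ≤ K * dn) :
    ε * dn ≤ ‖y‖ ∧ ‖y‖ ≤ (K + ε) * dn := by
  have a1 : ‖w‖ ≤ ‖y‖ + ‖y - w‖ := by
    calc ‖w‖ = ‖y - (y - w)‖ := by rw [sub_sub_cancel]
    _ ≤ ‖y‖ + ‖y - w‖ := norm_sub_le _ _
  have a2 : ‖y‖ ≤ ‖w‖ + ‖y - w‖ := by
    calc ‖y‖ = ‖w + (y - w)‖ := by rw [add_sub_cancel]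
    _ ≤ ‖w‖ + ‖y - w‖ := norm_add_le _ _
  constructor <;> linarith

lemma ratio {a b dn ε K : ℝ} (hε : 0 < ε) (hεK : ε ≤ K)
    (ha1 : ε * dn ≤ a) (ha2 : a ≤ (K + ε) * dn)
    (hb1 : ε * dn ≤ b) (hb2 : b ≤ (K + ε) * dn) :
    ((K + ε) / ε)⁻¹ * a ≤ b ∧ b ≤ ((K + ε) / ε) * a := by
  have hKε : (0 : ℝ) < K + ε := by linarith
  rw [inv_div]
  constructor
  · rw [div_mul_eq_mul_div, div_le_iff₀ hKε]
    nlinarith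
  · rw [div_mul_eq_mul_div, le_div_iff₀ hε]
    nlinarith

lemma ChartAt.param_bounds {τ η B c v ρ ε K} (h : ChartAt τ η B c v ρ ε)
    (h2 : 2 * ε ≤ ‖v‖) (hK : ‖v‖ ≤ K)
    {u u' : ℂ} (hu : ‖u‖ < ρ) (hu' : ‖u'‖ < ρ) :
    ε * ‖u - u'‖ ≤ ‖η u - η u'‖ ∧ ‖η u - η u'‖ ≤ (K + ε) * ‖u - u'‖ := by
  refine sandwich (h.est u u' hu hu') ?_ ?_
  · rw [norm_smul]
    nlinarith [norm_nonneg (u - u')]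
  · rw [norm_smul]
    nlinarith [norm_nonneg (u - u'), norm_nonneg v]

lemma mixed_bounds {τa ηa τb ηb Ba Bb} {c va vb : EuclideanSpace ℂ (Fin 2)} {ρ ε K : ℝ}
    {x x' : EuclideanSpace ℂ (Fin 2)}
    (ha : ChartAt τa ηa Ba c va ρ ε) (hb : ChartAt τb ηb Bb c vb ρ ε)
    (hcross : ∀ s t : ℂ, 2 * ε * (‖s‖ + ‖t‖) ≤ ‖s • va - t • vb‖)
    (hKa : ‖va‖ ≤ K) (hKb : ‖vb‖ ≤ K)
    (hx : x ∈ Ba) (hx' : x' ∈ Bb) (hτ : ‖τa x‖ < ρ) (hτ' : ‖τb x'‖ < ρ) :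
    ε * (‖τa x‖ + ‖τb x'‖) ≤ ‖x - x'‖ ∧ ‖x - x'‖ ≤ (K + ε) * (‖τa x‖ + ‖τb x'‖) := by
  have h0ρ : ‖(0 : ℂ)‖ < ρ := by simpa using ha.rpos
  have e1 : ‖x - c - τa x • va‖ ≤ ε * ‖τa x‖ := by
    have := ha.est (τa x) 0 hτ h0ρ
    rw [ha.etaTau x hx, ha.eta0] at this
    simpa using this
  have e2 : ‖x' - c - τb x' • vb‖ ≤ ε * ‖τb x'‖ := by
    have := hb.est (τb x') 0 hτ' h0ρ
    rw [hb.etaTau x' hx', hb.eta0] at this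
    simpa using this
  refine sandwich ?_ (hcross (τa x) (τb x')) ?_
  · have hre : (x - x') - (τa x • va - τb x' • vb)
        = (x - c - τa x • va) - (x' - c - τb x' • vb) := by abel
    rw [hre, mul_add]
    exact le_trans (norm_sub_le _ _) (add_le_add e1 e2)
  · calc ‖τa x • va - τb x' • vb‖ ≤ ‖τa x • va‖ + ‖τb x' • vb‖ := norm_sub_le _ _
    _ = ‖τa x‖ * ‖va‖ + ‖τb x'‖ * ‖vb‖ := by rw [norm_smul, norm_smul]
    _ ≤ K * (‖τa x‖ + ‖τb x'‖) := by
        nlinarith [norm_nonneg (τa x), norm_nonneg (τb x'), norm_nonneg va, norm_nonneg vb]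

lemma IsBranchAt.v_ne_zero {B : Set (EuclideanSpace ℂ (Fin 2))}
    {c v : EuclideanSpace ℂ (Fin 2)} (h : IsBranchAt B c v) : v ≠ 0 := by
  obtain ⟨D, γ, z₀, hD, hz₀D, hdiff, hinj, hne, hmh, hγz₀, hderiv⟩ := h
  exact hderiv ▸ hne z₀ hz₀D

lemma IsBranchAt.chart {B : Set (EuclideanSpace ℂ (Fin 2))}
    {c v : EuclideanSpace ℂ (Fin 2)} (h : IsBranchAt B c v) {ε : ℝ} (hε : 0 < ε) :
    ∃ (τ : EuclideanSpace ℂ (Fin 2) → ℂ) (η : ℂ → EuclideanSpace ℂ (Fin 2)) (ρ : ℝ),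
      ChartAt τ η B c v ρ ε ∧
      ∀ δ : ℝ, 0 < δ → ∃ r : ℝ, 0 < r ∧ ∀ x ∈ B, ‖x - c‖ < r → ‖τ x‖ < δ := by
  obtain ⟨D, γ, z₀, hD, hz₀D, hdiff, hinj, hne,
    ⟨hinjOn, himg, hcont, σ, hσcont, hσγ⟩, hγz₀, hderiv⟩ := h
  have hcd : ContinuousOn (deriv γ) D :=
    (hdiff.contDiffOn (n := 1) hD).continuousOn_deriv_of_isOpen hD le_rfl
  have hca : ContinuousAt (deriv γ) z₀ := hcd.continuousAt (hD.mem_nhds hz₀D)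
  obtain ⟨ρ₂, hρ₂, h2⟩ := Metric.continuousAt_iff.1 hca ε hε
  obtain ⟨ρ₁, hρ₁, hball⟩ := Metric.isOpen_iff.1 hD z₀ hz₀D
  set ρ := min ρ₁ ρ₂ with hρdef
  have hρ : 0 < ρ := lt_min hρ₁ hρ₂
  have hsubD : ball z₀ ρ ⊆ D := fun z hz => hball (ball_subset_ball (min_le_left _ _) hz)
  have hbd : ∀ z ∈ ball z₀ ρ, ‖deriv γ z - v‖ ≤ ε := by
    intro z hz
    have hd2 : dist z z₀ < ρ₂ := lt_of_lt_of_le (mem_ball.1 hz) (min_le_right _ _)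
    have := h2 hd2
    rw [hderiv, dist_eq_norm] at this
    exact this.le
  have hF : ∀ z ∈ ball z₀ ρ,
      HasDerivWithinAt (fun w => γ w - w • v) (deriv γ z - v) (ball z₀ ρ) z := by
    intro z hz
    have h1 : HasDerivAt γ (deriv γ z) z :=
      ((hdiff.differentiableAt (hD.mem_nhds (hsubD hz)))).hasDerivAt
    have h2' : HasDerivAt (fun w : ℂ => w • v) ((1 : ℂ) • v) z := (hasDerivAt_id z).smul_const v
    have := (h1.sub h2').hasDerivWithinAt (s := ball z₀ ρ)
    rw [one_smul] at this; exact this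
  have hmem : ∀ u : ℂ, ‖u‖ < ρ → z₀ + u ∈ ball z₀ ρ := by
    intro u hu
    rw [mem_ball, dist_eq_norm, add_sub_cancel_left]
    exact hu
  have key : ∀ u u' : ℂ, ‖u‖ < ρ → ‖u'‖ < ρ →
      ‖γ (z₀ + u) - γ (z₀ + u') - (u - u') • v‖ ≤ ε * ‖u - u'‖ := by
    intro u u' hu hu'
    have := (convex_ball z₀ ρ).norm_image_sub_le_of_norm_hasDerivWithin_le hF hbd
      (hmem u' hu') (hmem u hu)
    have e1 : (z₀ + u) - (z₀ + u') = u - u' := by ring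
    have e2 : γ (z₀ + u) - (z₀ + u) • v - (γ (z₀ + u') - (z₀ + u') • v)
        = γ (z₀ + u) - γ (z₀ + u') - (u - u') • v := by
      simp only [add_smul, sub_smul]
      abel
    rw [e2, e1] at this
    exact this
  have hσz₀ : σ c = z₀ := by rw [← hγz₀]; exact hσγ z₀ hz₀D
  refine ⟨fun x => σ x - z₀, fun u => γ (z₀ + u), ρ,
    ⟨hρ, by rw [add_zero]; exact hγz₀, by rw [hσz₀, sub_self], ?_, ?_, ?_, key⟩, ?_⟩
  · intro x hx
    rw [← himg] at hx
    obtain ⟨z, hz, rfl⟩ := hx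
    rw [hσγ z hz]
    have : z₀ + (z - z₀) = z := by ring
    rw [this]
  · intro u hu
    rw [← himg]
    exact Set.mem_image_of_mem γ (hsubD (hmem u hu))
  · intro u hu
    rw [hσγ _ (hsubD (hmem u hu))]
    ring
  · intro δ hδ
    have hcB : c ∈ B := by rw [← himg]; exact ⟨z₀, hz₀D, hγz₀⟩
    have hcw : ContinuousWithinAt σ B c := hσcont c hcB
    obtain ⟨r, hr, hcl⟩ := Metric.continuousWithinAt_iff.1 hcw δ hδ
    refine ⟨r, hr, fun x hx hxr => ?_⟩
    have := hcl hx (by rw [dist_eq_norm]; exact hxr)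
    rw [hσz₀, dist_eq_norm] at this
    exact this

lemma indep_bound {v₁ v₂ : EuclideanSpace ℂ (Fin 2)} (h1 : v₁ ≠ 0)
    (h : ∀ c : ℂ, v₂ ≠ c • v₁) :
    ∃ c₀ : ℝ, 0 < c₀ ∧ ∀ s t : ℂ, c₀ * (‖s‖ + ‖t‖) ≤ ‖s • v₁ - t • v₂‖ := by
  set T : ℂ × ℂ →ₗ[ℂ] EuclideanSpace ℂ (Fin 2) :=
    (LinearMap.fst ℂ ℂ ℂ).smulRight v₁ + (LinearMap.snd ℂ ℂ ℂ).smulRight v₂ with hTdef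
  have hT : ∀ s t : ℂ, T (s, t) = s • v₁ + t • v₂ := by
    intro s t
    simp [hTdef]
  have hker : LinearMap.ker T = ⊥ := by
    rw [LinearMap.ker_eq_bot']
    rintro ⟨s, t⟩ hst
    rw [hT] at hst
    by_cases ht : t = 0
    · subst ht
      have hs0 : s • v₁ = 0 := by simpa using hst
      rcases smul_eq_zero.1 hs0 with hs | hv
      · simp [hs]
      · exact absurd hv h1
    · exfalso
      apply h (-(t⁻¹ * s))
      have h2 : t • v₂ = -(s • v₁) := eq_neg_of_add_eq_zero_left (by rwa [add_comm] at hst)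
      have h3 := congrArg (fun w => t⁻¹ • w) h2
      simp only [smul_smul, inv_mul_cancel₀ ht, one_smul, smul_neg] at h3
      rw [h3, neg_smul]
  obtain ⟨K, hK0, hanti⟩ := T.exists_antilipschitzWith hker
  have hKr : (0 : ℝ) < (K : ℝ) := hK0
  refine ⟨(2 * (K : ℝ))⁻¹, by positivity, ?_⟩
  intro s t
  have hle := hanti.le_mul_dist (s, -t) 0
  rw [dist_zero_right, map_zero, dist_zero_right] at hle
  have hTs : T (s, -t) = s • v₁ - t • v₂ := by rw [hT, neg_smul, ← sub_eq_add_neg]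
  rw [hTs] at hle
  have hn : ‖(s, -t)‖ = max ‖s‖ ‖t‖ := by rw [Prod.norm_def]; simp
  rw [hn] at hle
  have hs1 : ‖s‖ ≤ (K : ℝ) * ‖s • v₁ - t • v₂‖ := le_trans (le_max_left _ _) hle
  have hs2 : ‖t‖ ≤ (K : ℝ) * ‖s • v₁ - t • v₂‖ := le_trans (le_max_right _ _) hle
  rw [inv_mul_le_iff₀ (by positivity)]
  linarith

lemma half {p q : EuclideanSpace ℂ (Fin 2)} {A₁ A₂ B₁ B₂ : Set (EuclideanSpace ℂ (Fin 2))}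
    {v₁ v₂ w₁ w₂ : EuclideanSpace ℂ (Fin 2)}
    {τ₁ τ₂ τ'₁ τ'₂ : EuclideanSpace ℂ (Fin 2) → ℂ}
    {η₁ η₂ η'₁ η'₂ : ℂ → EuclideanSpace ℂ (Fin 2)} {ρ ε K r : ℝ}
    (hε : 0 < ε)
    (hA : A₁ ∩ A₂ = {p}) (hB : B₁ ∩ B₂ = {q})
    (hcX : ∀ s t : ℂ, 2 * ε * (‖s‖ + ‖t‖) ≤ ‖s • v₁ - t • v₂‖)
    (hcY : ∀ s t : ℂ, 2 * ε * (‖s‖ + ‖t‖) ≤ ‖s • w₁ - t • w₂‖)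
    (hKv₁ : ‖v₁‖ ≤ K) (hKv₂ : ‖v₂‖ ≤ K) (hKw₁ : ‖w₁‖ ≤ K) (hKw₂ : ‖w₂‖ ≤ K)
    (h₁ : ChartAt τ₁ η₁ A₁ p v₁ ρ ε) (h₂ : ChartAt τ₂ η₂ A₂ p v₂ ρ ε)
    (h₁' : ChartAt τ'₁ η'₁ B₁ q w₁ ρ ε) (h₂' : ChartAt τ'₂ η'₂ B₂ q w₂ ρ ε)
    (hr : 0 < r)
    (hsm₁ : ∀ x ∈ A₁, ‖x - p‖ < r → ‖τ₁ x‖ < ρ)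
    (hsm₂ : ∀ x ∈ A₂, ‖x - p‖ < r → ‖τ₂ x‖ < ρ)
    (hsm₁' : ∀ y ∈ B₁, ‖y - q‖ < r → ‖τ'₁ y‖ < ρ)
    (hsm₂' : ∀ y ∈ B₂, ‖y - q‖ < r → ‖τ'₂ y‖ < ρ)
    (f g : EuclideanSpace ℂ (Fin 2) → EuclideanSpace ℂ (Fin 2))
    (hfd : ∀ x, x ∈ A₁ → f x = η'₁ (τ₁ x)) (hfd' : ∀ x, x ∉ A₁ → f x = η'₂ (τ₂ x))
    (hgd : ∀ y, y ∈ B₁ → g y = η₁ (τ'₁ y)) (hgd' : ∀ y, y ∉ B₁ → g y = η₂ (τ'₂ y)) :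
    f p = q ∧
    (∀ x, x ∈ A₁ ∪ A₂ → ‖x - p‖ < r → f x ∈ B₁ ∪ B₂ ∧ g (f x) = x) ∧
    (∀ x, x ∈ A₁ ∪ A₂ → ‖x - p‖ < r → ∀ x', x' ∈ A₁ ∪ A₂ → ‖x' - p‖ < r →
      ((K + ε) / ε)⁻¹ * ‖x - x'‖ ≤ ‖f x - f x'‖ ∧ ‖f x - f x'‖ ≤ ((K + ε) / ε) * ‖x - x'‖) := by
  have hp12 : p ∈ A₁ ∩ A₂ := by rw [hA]; exact rfl
  have hq12 : q ∈ B₁ ∩ B₂ := by rw [hB]; exact rfl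
  have h2v₁ : 2 * ε ≤ ‖v₁‖ := by simpa using hcX 1 0
  have h2v₂ : 2 * ε ≤ ‖v₂‖ := by simpa using hcX 0 1
  have h2w₁ : 2 * ε ≤ ‖w₁‖ := by simpa using hcY 1 0
  have h2w₂ : 2 * ε ≤ ‖w₂‖ := by simpa using hcY 0 1
  have hεK : ε ≤ K := by linarith
  have hfp : f p = q := by rw [hfd p hp12.1, h₁.tau0, h₁'.eta0]
  refine ⟨hfp, ?_, ?_⟩
  · intro x hx hxr
    by_cases hx1 : x ∈ A₁
    · have hs : ‖τ₁ x‖ < ρ := hsm₁ x hx1 hxr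
      rw [hfd x hx1]
      refine ⟨Or.inl (h₁'.memB _ hs), ?_⟩
      rw [hgd _ (h₁'.memB _ hs), h₁'.tauEta _ hs, h₁.etaTau x hx1]
    · have hx2 : x ∈ A₂ := hx.resolve_left hx1
      have ht : ‖τ₂ x‖ < ρ := hsm₂ x hx2 hxr
      rw [hfd' x hx1]
      have hmem2 : η'₂ (τ₂ x) ∈ B₂ := h₂'.memB _ ht
      have hnot : η'₂ (τ₂ x) ∉ B₁ := by
        intro hmem1
        have hfxq : η'₂ (τ₂ x) = q := by
          have : η'₂ (τ₂ x) ∈ B₁ ∩ B₂ := ⟨hmem1, hmem2⟩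
          rwa [hB] at this
        have h0ρ : ‖(0 : ℂ)‖ < ρ := by simpa using h₂'.rpos
        have hb := (h₂'.param_bounds h2w₂ hKw₂ ht h0ρ).1
        rw [h₂'.eta0, hfxq, sub_self, norm_zero, sub_zero] at hb
        have hτ0 : τ₂ x = 0 := by
          have : ‖τ₂ x‖ ≤ 0 := by nlinarith [norm_nonneg (τ₂ x)]
          exact norm_eq_zero.1 (le_antisymm this (norm_nonneg _))
        have hxp : x = p := by
          have he := h₂.etaTau x hx2
          rw [hτ0, h₂.eta0] at he
          exact he.symm
        exact hx1 (hxp ▸ hp12.1)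
      refine ⟨Or.inr hmem2, ?_⟩
      rw [hgd' _ hnot, h₂'.tauEta _ ht, h₂.etaTau x hx2]
  · intro x hx hxr x' hx' hx'r
    by_cases hx1 : x ∈ A₁ <;> by_cases hx1' : x' ∈ A₁
    · -- both in A₁
      have hs := hsm₁ x hx1 hxr
      have hs' := hsm₁ x' hx1' hx'r
      rw [hfd x hx1, hfd x' hx1']
      have Ha := h₁.param_bounds h2v₁ hKv₁ hs hs'
      rw [h₁.etaTau x hx1, h₁.etaTau x' hx1'] at Ha
      have Hb := h₁'.param_bounds h2w₁ hKw₁ hs hs'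
      exact ratio hε hεK Ha.1 Ha.2 Hb.1 Hb.2
    · -- x ∈ A₁, x' ∉ A₁
      have hx2' : x' ∈ A₂ := hx'.resolve_left hx1'
      have hs := hsm₁ x hx1 hxr
      have ht := hsm₂ x' hx2' hx'r
      rw [hfd x hx1, hfd' x' hx1']
      have Ha := mixed_bounds h₁ h₂ hcX hKv₁ hKv₂ hx1 hx2' hs ht
      have hs2 : ‖τ'₁ (η'₁ (τ₁ x))‖ < ρ := by rw [h₁'.tauEta _ hs]; exact hs
      have ht2 : ‖τ'₂ (η'₂ (τ₂ x'))‖ < ρ := by rw [h₂'.tauEta _ ht]; exact ht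
      have Hb := mixed_bounds h₁' h₂' hcY hKw₁ hKw₂ (h₁'.memB _ hs) (h₂'.memB _ ht) hs2 ht2
      rw [h₁'.tauEta _ hs, h₂'.tauEta _ ht] at Hb
      exact ratio hε hεK Ha.1 Ha.2 Hb.1 Hb.2
    · -- x ∉ A₁, x' ∈ A₁
      have hx2 : x ∈ A₂ := hx.resolve_left hx1
      have hs' := hsm₁ x' hx1' hx'r
      have ht := hsm₂ x hx2 hxr
      rw [hfd x' hx1', hfd' x hx1]
      have Ha := mixed_bounds h₁ h₂ hcX hKv₁ hKv₂ hx1' hx2 hs' ht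
      have hs2 : ‖τ'₁ (η'₁ (τ₁ x'))‖ < ρ := by rw [h₁'.tauEta _ hs']; exact hs'
      have ht2 : ‖τ'₂ (η'₂ (τ₂ x))‖ < ρ := by rw [h₂'.tauEta _ ht]; exact ht
      have Hb := mixed_bounds h₁' h₂' hcY hKw₁ hKw₂ (h₁'.memB _ hs') (h₂'.memB _ ht) hs2 ht2
      rw [h₁'.tauEta _ hs', h₂'.tauEta _ ht] at Hb
      rw [norm_sub_rev x x', norm_sub_rev (η'₂ (τ₂ x)) (η'₁ (τ₁ x'))]
      exact ratio hε hεK Ha.1 Ha.2 Hb.1 Hb.2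
    · -- both in A₂ \ A₁
      have hx2 : x ∈ A₂ := hx.resolve_left hx1
      have hx2' : x' ∈ A₂ := hx'.resolve_left hx1'
      have hs := hsm₂ x hx2 hxr
      have hs' := hsm₂ x' hx2' hx'r
      rw [hfd' x hx1, hfd' x' hx1']
      have Ha := h₂.param_bounds h2v₂ hKv₂ hs hs'
      rw [h₂.etaTau x hx2, h₂.etaTau x' hx2'] at Ha
      have Hb := h₂'.param_bounds h2w₂ hKw₂ hs hs'
      exact ratio hε hεK Ha.1 Ha.2 Hb.1 Hb.2


/-- any two nodes of algebraic plane curves have bi-Lipschitz equivalent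
germs. -/
theorem stmt_8 (X Y : Set (EuclideanSpace ℂ (Fin 2)))
    (hX : IsAlgebraicCurve X) (hY : IsAlgebraicCurve Y)
    (p q : EuclideanSpace ℂ (Fin 2)) (hp : IsNode X p) (hq : IsNode Y q) :
    GermBiLipschitzEquiv X p Y q := by
  classical
  obtain ⟨hpX, UX, A₁, A₂, v₁, v₂, hUXo, hpUX, hXU, hA, hbA₁, hbA₂, hindX⟩ := hp
  obtain ⟨hqY, UY, B₁, B₂, w₁, w₂, hUYo, hqUY, hYU, hB, hbB₁, hbB₂, hindY⟩ := hq
  have hp12 : p ∈ A₁ ∩ A₂ := by rw [hA]; exact rfl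
  have hq12 : q ∈ B₁ ∩ B₂ := by rw [hB]; exact rfl
  have hv₁ : v₁ ≠ 0 := hbA₁.v_ne_zero
  have hw₁ : w₁ ≠ 0 := hbB₁.v_ne_zero
  obtain ⟨cX, hcX0, hcX⟩ := indep_bound hv₁ hindX
  obtain ⟨cY, hcY0, hcY⟩ := indep_bound hw₁ hindY
  set ε := min cX cY / 2 with hεdef
  have hmin : 0 < min cX cY := lt_min hcX0 hcY0
  have hε : 0 < ε := by rw [hεdef]; linarith
  have hcX' : ∀ s t : ℂ, 2 * ε * (‖s‖ + ‖t‖) ≤ ‖s • v₁ - t • v₂‖ := by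
    intro s t
    refine le_trans ?_ (hcX s t)
    have h1 : 2 * ε ≤ cX := by
      have := min_le_left cX cY
      rw [hεdef]; linarith
    nlinarith [norm_nonneg s, norm_nonneg t]
  have hcY' : ∀ s t : ℂ, 2 * ε * (‖s‖ + ‖t‖) ≤ ‖s • w₁ - t • w₂‖ := by
    intro s t
    refine le_trans ?_ (hcY s t)
    have h1 : 2 * ε ≤ cY := by
      have := min_le_right cX cY
      rw [hεdef]; linarith
    nlinarith [norm_nonneg s, norm_nonneg t]
  obtain ⟨τ₁, η₁, ρ₁, hch₁, hsmq₁⟩ := hbA₁.chart hε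
  obtain ⟨τ₂, η₂, ρ₂, hch₂, hsmq₂⟩ := hbA₂.chart hε
  obtain ⟨τ'₁, η'₁, ρ₃, hch₃, hsmq₃⟩ := hbB₁.chart hε
  obtain ⟨τ'₂, η'₂, ρ₄, hch₄, hsmq₄⟩ := hbB₂.chart hε
  set ρ := min (min ρ₁ ρ₂) (min ρ₃ ρ₄) with hρdef
  have hρ : 0 < ρ := lt_min (lt_min hch₁.rpos hch₂.rpos) (lt_min hch₃.rpos hch₄.rpos)
  have hc₁ := hch₁.mono hρ (le_trans (min_le_left _ _) (min_le_left _ _))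
  have hc₂ := hch₂.mono hρ (le_trans (min_le_left _ _) (min_le_right _ _))
  have hc₃ := hch₃.mono hρ (le_trans (min_le_right _ _) (min_le_left _ _))
  have hc₄ := hch₄.mono hρ (le_trans (min_le_right _ _) (min_le_right _ _))
  obtain ⟨r₁, hr₁, hs₁⟩ := hsmq₁ ρ hρ
  obtain ⟨r₂, hr₂, hs₂⟩ := hsmq₂ ρ hρ
  obtain ⟨r₃, hr₃, hs₃⟩ := hsmq₃ ρ hρ
  obtain ⟨r₄, hr₄, hs₄⟩ := hsmq₄ ρ hρ
  obtain ⟨rX, hrX, hballX⟩ := Metric.isOpen_iff.1 hUXo p hpUX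
  obtain ⟨rY, hrY, hballY⟩ := Metric.isOpen_iff.1 hUYo q hqUY
  set r := min (min (min r₁ r₂) (min r₃ r₄)) (min rX rY) with hrdef
  have hr : 0 < r :=
    lt_min (lt_min (lt_min hr₁ hr₂) (lt_min hr₃ hr₄)) (lt_min hrX hrY)
  have hrr₁ : r ≤ r₁ := le_trans (min_le_left _ _) (le_trans (min_le_left _ _) (min_le_left _ _))
  have hrr₂ : r ≤ r₂ := le_trans (min_le_left _ _) (le_trans (min_le_left _ _) (min_le_right _ _))
  have hrr₃ : r ≤ r₃ := le_trans (min_le_left _ _) (le_trans (min_le_right _ _) (min_le_left _ _))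
  have hrr₄ : r ≤ r₄ := le_trans (min_le_left _ _) (le_trans (min_le_right _ _) (min_le_right _ _))
  have hrrX : r ≤ rX := le_trans (min_le_right _ _) (min_le_left _ _)
  have hrrY : r ≤ rY := le_trans (min_le_right _ _) (min_le_right _ _)
  set K := max (max ‖v₁‖ ‖v₂‖) (max ‖w₁‖ ‖w₂‖) with hKdef
  have hKv₁ : ‖v₁‖ ≤ K := le_trans (le_max_left _ _) (le_max_left _ _)
  have hKv₂ : ‖v₂‖ ≤ K := le_trans (le_max_right _ _) (le_max_left _ _)
  have hKw₁ : ‖w₁‖ ≤ K := le_trans (le_max_left _ _) (le_max_right _ _)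
  have hKw₂ : ‖w₂‖ ≤ K := le_trans (le_max_right _ _) (le_max_right _ _)
  set f : EuclideanSpace ℂ (Fin 2) → EuclideanSpace ℂ (Fin 2) :=
    fun x => if x ∈ A₁ then η'₁ (τ₁ x) else η'₂ (τ₂ x) with hfdef
  set g : EuclideanSpace ℂ (Fin 2) → EuclideanSpace ℂ (Fin 2) :=
    fun y => if y ∈ B₁ then η₁ (τ'₁ y) else η₂ (τ'₂ y) with hgdef
  have hfd : ∀ x, x ∈ A₁ → f x = η'₁ (τ₁ x) := fun x hx => if_pos hx
  have hfd' : ∀ x, x ∉ A₁ → f x = η'₂ (τ₂ x) := fun x hx => if_neg hx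
  have hgd : ∀ y, y ∈ B₁ → g y = η₁ (τ'₁ y) := fun y hy => if_pos hy
  have hgd' : ∀ y, y ∉ B₁ → g y = η₂ (τ'₂ y) := fun y hy => if_neg hy
  have hsmall₁ : ∀ x ∈ A₁, ‖x - p‖ < r → ‖τ₁ x‖ < ρ :=
    fun x hx hxr => hs₁ x hx (lt_of_lt_of_le hxr hrr₁)
  have hsmall₂ : ∀ x ∈ A₂, ‖x - p‖ < r → ‖τ₂ x‖ < ρ :=
    fun x hx hxr => hs₂ x hx (lt_of_lt_of_le hxr hrr₂)
  have hsmall₃ : ∀ y ∈ B₁, ‖y - q‖ < r → ‖τ'₁ y‖ < ρ :=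
    fun y hy hyr => hs₃ y hy (lt_of_lt_of_le hyr hrr₃)
  have hsmall₄ : ∀ y ∈ B₂, ‖y - q‖ < r → ‖τ'₂ y‖ < ρ :=
    fun y hy hyr => hs₄ y hy (lt_of_lt_of_le hyr hrr₄)
  have H1 := half hε hA hB hcX' hcY' hKv₁ hKv₂ hKw₁ hKw₂ hc₁ hc₂ hc₃ hc₄ hr
    hsmall₁ hsmall₂ hsmall₃ hsmall₄ f g hfd hfd' hgd hgd'
  have H2 := half hε hB hA hcY' hcX' hKw₁ hKw₂ hKv₁ hKv₂ hc₃ hc₄ hc₁ hc₂ hr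
    hsmall₃ hsmall₄ hsmall₁ hsmall₂ g f hgd hgd' hfd hfd'
  set C := (K + ε) / ε with hCdef
  have hK0 : (0 : ℝ) ≤ K := le_trans (norm_nonneg v₁) hKv₁
  have hC1 : 1 ≤ C := by
    rw [hCdef, le_div_iff₀ hε]; linarith
  have hCpos : (0 : ℝ) < C := lt_of_lt_of_le zero_lt_one hC1
  set δ := r / C with hδdef
  have hδ : 0 < δ := div_pos hr hCpos
  have hCδ : C * δ = r := by
    rw [hδdef, mul_comm, div_mul_cancel₀ _ (ne_of_gt hCpos)]
  have hδr : δ ≤ r := by rw [hδdef]; exact div_le_self (le_of_lt hr) hC1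
  have hXball : X ∩ ball p δ = (A₁ ∪ A₂) ∩ ball p δ := by
    ext x
    constructor
    · rintro ⟨hxX, hxb⟩
      refine ⟨?_, hxb⟩
      have hxU : x ∈ UX := hballX (ball_subset_ball (le_trans hδr hrrX) hxb)
      rw [← hXU]
      exact ⟨hxX, hxU⟩
    · rintro ⟨hxA, hxb⟩
      refine ⟨?_, hxb⟩
      rw [← hXU] at hxA
      exact hxA.1
  have hBY : B₁ ∪ B₂ ⊆ Y := by rw [← hYU]; exact Set.inter_subset_left
  have hAX : A₁ ∪ A₂ ⊆ X := by rw [← hXU]; exact Set.inter_subset_left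
  have hYball : ∀ y ∈ Y, ‖y - q‖ < r → y ∈ B₁ ∪ B₂ := by
    intro y hy hyr
    rw [← hYU]
    refine ⟨hy, hballY ?_⟩
    rw [mem_ball, dist_eq_norm]
    exact lt_of_lt_of_le hyr hrrY
  set S : Set (EuclideanSpace ℂ (Fin 2)) :=
    {y | y ∈ B₁ ∪ B₂ ∧ ‖y - q‖ < C * δ ∧ ‖g y - p‖ < δ} with hSdef
  set V := ball q (C * δ) ∩ ⋃ y ∈ S, ball y ((δ - ‖g y - p‖) / C) with hVdef
  have hVopen : IsOpen V := isOpen_ball.inter (isOpen_biUnion fun _ _ => isOpen_ball)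
  have hYV : Y ∩ V = S := by
    ext y
    constructor
    · rintro ⟨hyY, hyb, hyu⟩
      have hyq : ‖y - q‖ < C * δ := by rw [← dist_eq_norm]; exact mem_ball.1 hyb
      have hyr : ‖y - q‖ < r := lt_of_lt_of_le hyq (le_of_eq hCδ)
      have hyB : y ∈ B₁ ∪ B₂ := hYball y hyY hyr
      obtain ⟨y₀, hy₀S, hyy₀⟩ := Set.mem_iUnion₂.1 hyu
      have hy₀B : y₀ ∈ B₁ ∪ B₂ := hy₀S.1
      have hy₀r : ‖y₀ - q‖ < r := lt_of_lt_of_le hy₀S.2.1 (le_of_eq hCδ)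
      have hlip := (H2.2.2 y hyB hyr y₀ hy₀B hy₀r).2
      have hdist : ‖y - y₀‖ < (δ - ‖g y₀ - p‖) / C := by
        rw [← dist_eq_norm]; exact mem_ball.1 hyy₀
      have h2 : C * ‖y - y₀‖ < δ - ‖g y₀ - p‖ := by
        have := mul_lt_mul_of_pos_left hdist hCpos
        rwa [mul_comm C ((δ - ‖g y₀ - p‖) / C), div_mul_cancel₀ _ (ne_of_gt hCpos)] at this
      have htri : ‖g y - p‖ ≤ ‖g y - g y₀‖ + ‖g y₀ - p‖ := by
        calc ‖g y - p‖ = ‖(g y - g y₀) + (g y₀ - p)‖ := by rw [sub_add_sub_cancel]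
        _ ≤ ‖g y - g y₀‖ + ‖g y₀ - p‖ := norm_add_le _ _
      exact ⟨hyB, hyq, by linarith⟩
    · rintro ⟨hyB, hyq, hyg⟩
      refine ⟨hBY hyB, ?_, ?_⟩
      · rw [mem_ball, dist_eq_norm]; exact hyq
      · exact Set.mem_biUnion ⟨hyB, hyq, hyg⟩
          (mem_ball_self (div_pos (by linarith) hCpos))
  refine ⟨ball p δ, V, isOpen_ball, hVopen, mem_ball_self hδ, ?_, f,
    ⟨⟨?_, ?_, ?_⟩, C, hC1, ?_⟩, H1.1⟩
  · -- q ∈ V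
    have hgq : g q = p := H2.1
    have hqS : q ∈ S := by
      refine ⟨Or.inl hq12.1, ?_, ?_⟩
      · rw [sub_self, norm_zero, hCδ]; exact hr
      · rw [hgq, sub_self, norm_zero]; exact hδ
    have hq' : q ∈ Y ∩ V := by rw [hYV]; exact hqS
    exact hq'.2
  · -- MapsTo
    intro x hx
    rw [hXball] at hx
    obtain ⟨hxA, hxb⟩ := hx
    have hxδ : ‖x - p‖ < δ := by rw [← dist_eq_norm]; exact mem_ball.1 hxb
    have hxr : ‖x - p‖ < r := lt_of_lt_of_le hxδ hδr
    have hfx := H1.2.1 x hxA hxr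
    have hpA : p ∈ A₁ ∪ A₂ := Or.inl hp12.1
    have hfq : ‖f x - q‖ ≤ C * ‖x - p‖ := by
      have := (H1.2.2 x hxA hxr p hpA (by rw [sub_self, norm_zero]; exact hr)).2
      rwa [H1.1] at this
    have : f x ∈ S := by
      refine ⟨hfx.1, lt_of_le_of_lt hfq (mul_lt_mul_of_pos_left hxδ hCpos), ?_⟩
      rw [hfx.2]; exact hxδ
    have h' : f x ∈ Y ∩ V := by rw [hYV]; exact this
    exact h'
  · -- InjOn
    intro x hx x' hx' he
    rw [hXball] at hx hx'
    have hxr : ‖x - p‖ < r := lt_of_lt_of_le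
      (by rw [← dist_eq_norm]; exact mem_ball.1 hx.2) hδr
    have hx'r : ‖x' - p‖ < r := lt_of_lt_of_le
      (by rw [← dist_eq_norm]; exact mem_ball.1 hx'.2) hδr
    have e1 := (H1.2.1 x hx.1 hxr).2
    have e2 := (H1.2.1 x' hx'.1 hx'r).2
    rw [← e1, ← e2, he]
  · -- SurjOn
    intro y hy
    have hyS : y ∈ S := by rw [← hYV]; exact hy
    obtain ⟨hyB, hyq, hyg⟩ := hyS
    have hyr : ‖y - q‖ < r := lt_of_lt_of_le hyq (le_of_eq hCδ)
    have hgy := H2.2.1 y hyB hyr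
    refine ⟨g y, ?_, hgy.2⟩
    rw [hXball]
    refine ⟨hgy.1, ?_⟩
    rw [mem_ball, dist_eq_norm]
    exact hyg
  · -- bi-Lipschitz bounds
    intro x hx x' hx'
    rw [hXball] at hx hx'
    have hxr : ‖x - p‖ < r := lt_of_lt_of_le
      (by rw [← dist_eq_norm]; exact mem_ball.1 hx.2) hδr
    have hx'r : ‖x' - p‖ < r := lt_of_lt_of_le
      (by rw [← dist_eq_norm]; exact mem_ball.1 hx'.2) hδr
    exact H1.2.2 x hx.1 hxr x' hx'.1 hx'r


end
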